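/- Suppose for every point set Q in R^δ there is a Tverberg point of depth ⌈|Q|/ρ⌉ (ρ ≥ 1 real). Then for any n-point set P in R^d with d ≥ δ, there exists a Tverberg point of depth ⌈n/ρ^{⌈d/δ⌉}⌉. -/

import Mathlib

/-- `x` has Tverberg depth `r` with respect to the finite set `Q`. -/
def HasTverbergDepth {m : ℕ} (Q : Finset (EuclideanSpace ℝ (Fin m)))
    (x : EuclideanSpace ℝ (Fin m)) (r : ℕ) : Prop :=
  ∃ f : Fin r → Finset (EuclideanSpace ℝ (Fin m)),
    (∀ i, (f i).Nonempty) ∧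
    (∀ i j, i ≠ j → Disjoint (f i) (f j)) ∧
    (∀ p ∈ Q, ∃ i, p ∈ f i) ∧ (∀ i, f i ⊆ Q) ∧
    ∀ i, x ∈ convexHull ℝ ((f i : Set (EuclideanSpace ℝ (Fin m))))

noncomputable section DimRedAux

open Metric Set Function

abbrev Euc (m : ℕ) := EuclideanSpace ℝ (Fin m)

/-- Tverberg depth for a (possibly repeating) family of points, as a surjection of index sets. -/
def FamTv {m N r : ℕ} (x : Fin N → Euc m) (c : Euc m) (φ : Fin N → Fin r) : Prop :=
  Function.Surjective φ ∧ ∀ j, c ∈ convexHull ℝ (x '' (φ ⁻¹' {j}))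

lemma hull_subset_cthickening {m : ℕ} {A B : Set (Euc m)} {ε : ℝ} (hε : 0 ≤ ε)
    (h : ∀ a ∈ A, ∃ b ∈ B, dist a b ≤ ε) :
    convexHull ℝ A ⊆ cthickening ε (convexHull ℝ B) := by
  refine convexHull_min (fun a ha => ?_) ((convex_convexHull ℝ B).cthickening ε)
  obtain ⟨b, hb, hd⟩ := h a ha
  exact Metric.mem_cthickening_of_dist_le a b ε _ (subset_convexHull ℝ B hb) hd

/-- Merging parts: a Tverberg family point of depth `r` is one of any positive depth `r' ≤ r`. -/
lemma FamTv.shrink {m N r r' : ℕ} (hle : r' ≤ r) (hr' : 0 < r') {x : Fin N → Euc m}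
    {c : Euc m} {φ : Fin N → Fin r} (h : FamTv x c φ) :
    ∃ φ' : Fin N → Fin r', FamTv x c φ' := by
  obtain ⟨hs, hm⟩ := h
  refine ⟨fun i => if hlt : ((φ i : ℕ)) < r' then ⟨φ i, hlt⟩ else ⟨0, hr'⟩, ?_, ?_⟩
  · intro j
    obtain ⟨i, hi⟩ := hs (Fin.castLE hle j)
    have hlt : ((φ i : ℕ)) < r' := by rw [hi]; exact j.2
    refine ⟨i, ?_⟩
    simp only [hlt, dif_pos]
    ext
    simp [hi]
  · intro j
    refine convexHull_mono (Set.image_mono ?_) (hm (Fin.castLE hle j))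
    intro i hi
    simp only [Set.mem_preimage, Set.mem_singleton_iff] at hi ⊢
    have hlt : ((φ i : ℕ)) < r' := by rw [hi]; exact j.2
    simp only [hlt, dif_pos]
    ext
    simp [hi]

/-- The family version of the hypothesis: even for a family of (possibly repeated) points,
there is a Tverberg point of depth `⌈N/ρ⌉`.  Proved by perturbing the family into general
position and passing to the limit. -/
lemma family_hyp {δ : ℕ} (hδ : 1 ≤ δ) {ρ : ℝ} (hρ : 1 ≤ ρ)
    (hyp : ∀ Q : Finset (EuclideanSpace ℝ (Fin δ)),
      ∃ c, HasTverbergDepth Q c (⌈(Q.card : ℝ) / ρ⌉.toNat))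
    (N : ℕ) (x : Fin N → Euc δ) :
    ∃ c, ∃ φ : Fin N → Fin (⌈(N : ℝ) / ρ⌉.toNat), FamTv x c φ := by
  classical
  have hρ0 : (0 : ℝ) < ρ := by linarith
  rcases Nat.eq_zero_or_pos N with hN | hN
  · subst hN
    have h0 : (⌈((0 : ℕ) : ℝ) / ρ⌉.toNat) = 0 := by norm_num
    have hemp : IsEmpty (Fin (⌈((0 : ℕ) : ℝ) / ρ⌉.toNat)) := by rw [h0]; infer_instance
    exact ⟨0, fun i => i.elim0, fun j => hemp.elim j, fun j => hemp.elim j⟩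
  -- the perturbation direction
  set u : Euc δ := EuclideanSpace.single (⟨0, hδ⟩ : Fin δ) (1 : ℝ) with hu
  have hu0 : u ≠ 0 := by
    intro h
    have h1 : u ⟨0, hδ⟩ = 1 := by simp [hu]
    rw [h] at h1
    simpa using h1
  -- the bad set of perturbation parameters is finite
  set bad : Set ℝ :=
    {ε | ∃ i j : Fin N, i ≠ j ∧ x i + (ε * (i : ℕ)) • u = x j + (ε * (j : ℕ)) • u} with hbad
  have hbadfin : bad.Finite := by
    have hsub : bad ⊆ ⋃ p : Fin N × Fin N,
        {ε | p.1 ≠ p.2 ∧ x p.1 + (ε * (p.1 : ℕ)) • u = x p.2 + (ε * (p.2 : ℕ)) • u} := by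
      rintro ε ⟨i, j, hij, he⟩
      exact Set.mem_iUnion.2 ⟨(i, j), hij, he⟩
    refine (Set.finite_iUnion fun p => ?_).subset hsub
    apply Set.Subsingleton.finite
    rintro ε₁ ⟨hij, h1⟩ ε₂ ⟨-, h2⟩
    have e3 : ((ε₁ - ε₂) * (((p.1 : ℕ) : ℝ) - ((p.2 : ℕ) : ℝ))) • u = 0 := by
      linear_combination (norm := module) h1 - h2
    rcases smul_eq_zero.1 e3 with h | h
    · rcases mul_eq_zero.1 h with h | h
      · exact sub_eq_zero.1 h
      · exfalso
        have : ((p.1 : ℕ) : ℝ) = ((p.2 : ℕ) : ℝ) := sub_eq_zero.1 h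
        exact hij (Fin.ext (Nat.cast_injective this))
    · exact absurd h hu0
  -- choose good perturbation parameters tending to zero
  have hsel : ∀ n : ℕ, ∃ ε : ℝ, ε ∈ Set.Ioo (0 : ℝ) (1 / ((n : ℝ) + 1)) \ bad := by
    intro n
    exact ((Set.Ioo_infinite (by positivity)).diff hbadfin).nonempty
  choose ε hε using hsel
  have hεpos : ∀ n, 0 < ε n := fun n => (hε n).1.1
  have hεlt : ∀ n, ε n < 1 / ((n : ℝ) + 1) := fun n => (hε n).1.2
  have hεbad : ∀ n, ε n ∉ bad := fun n => (hε n).2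
  have hεle1 : ∀ n, ε n ≤ 1 := by
    intro n
    have h1 : (1 : ℝ) / ((n : ℝ) + 1) ≤ 1 := by
      rw [div_le_one (by positivity)]
      have : (0 : ℝ) ≤ (n : ℝ) := Nat.cast_nonneg n
      linarith
    linarith [hεlt n]
  have hεto0 : Filter.Tendsto ε Filter.atTop (nhds 0) := by
    refine tendsto_of_tendsto_of_tendsto_of_le_of_le (g := fun _ : ℕ => (0 : ℝ))
      (h := fun n : ℕ => 1 / ((n : ℝ) + 1)) tendsto_const_nhds
      tendsto_one_div_add_atTop_nhds_zero_nat (fun n => (hεpos n).le) (fun n => (hεlt n).le)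
  -- the perturbed families
  set xp : ℕ → Fin N → Euc δ := fun n i => x i + ((ε n) * (i : ℕ)) • u with hxp
  have hinj : ∀ n, Function.Injective (xp n) := by
    intro n i j hij
    by_contra hne
    exact hεbad n ⟨i, j, hne, hij⟩
  set r₁ := (⌈(N : ℝ) / ρ⌉.toNat) with hr₁
  have hr₁pos : 0 < r₁ := by
    have h1 : (0 : ℝ) < (N : ℝ) / ρ := by positivity
    have h2 := Int.ceil_pos.mpr h1
    omega
  -- apply the hypothesis to each perturbed family
  have key : ∀ n : ℕ, ∃ c : Euc δ, ∃ φ : Fin N → Fin r₁,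
      Function.Surjective φ ∧ ∀ j, c ∈ convexHull ℝ ((xp n) '' (φ ⁻¹' {j})) := by
    intro n
    set Q : Finset (Euc δ) := Finset.image (xp n) Finset.univ with hQ
    have hcard : Q.card = N := by
      rw [hQ, Finset.card_image_of_injective _ (hinj n), Finset.card_univ, Fintype.card_fin]
    have h' := hyp Q
    rw [hcard] at h'
    obtain ⟨c, hc⟩ := h'
    unfold HasTverbergDepth at hc
    obtain ⟨f, hne, hdisj, hcover, hsub, hhull⟩ := hc
    have hmem : ∀ i : Fin N, ∃ j, xp n i ∈ f j :=
      fun i => hcover _ (Finset.mem_image_of_mem _ (Finset.mem_univ i))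
    choose φ hφ using hmem
    have hφeq : ∀ (i : Fin N) (j : Fin r₁), xp n i ∈ f j → φ i = j := by
      intro i j hij
      by_contra hne'
      exact (Finset.disjoint_left.1 (hdisj _ _ hne') (hφ i)) hij
    have hfeq : ∀ j, (f j : Set (Euc δ)) = xp n '' (φ ⁻¹' {j}) := by
      intro j
      ext q
      constructor
      · intro hq
        have hq' : q ∈ f j := hq
        obtain ⟨i, -, rfl⟩ := Finset.mem_image.1 (hsub j hq')
        exact ⟨i, hφeq i j hq', rfl⟩
      · rintro ⟨i, hi, rfl⟩
        have : φ i = j := hi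
        rw [← this]
        exact hφ i
    refine ⟨c, φ, ?_, ?_⟩
    · intro j
      obtain ⟨q, hq⟩ := hne j
      obtain ⟨i, -, rfl⟩ := Finset.mem_image.1 (hsub j hq)
      exact ⟨i, hφeq i j hq⟩
    · intro j
      rw [← hfeq j]
      exact hhull j
  choose c φn hsurj hmem using key
  -- pigeonhole: one partition pattern occurs infinitely often
  obtain ⟨φ, hφinf⟩ := Finite.exists_infinite_fiber φn
  have hS : (φn ⁻¹' {φ}).Infinite := Set.infinite_coe_iff.mp hφinf
  set emb := hS.natEmbedding with hemb
  set k : ℕ → ℕ := fun t => ((emb t : (φn ⁻¹' {φ})) : ℕ) with hk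
  have hkinj : Function.Injective k := fun a b h => emb.injective (Subtype.ext h)
  have hkfib : ∀ t, φn (k t) = φ := fun t => (emb t).2
  -- a compact set containing all the Tverberg points
  set K0 := convexHull ℝ (Set.range x) with hK0def
  have hK0 : IsCompact K0 := (Set.finite_range x).isCompact_convexHull ℝ
  set M : ℝ := (N : ℝ) * ‖u‖ with hM
  have hM0 : 0 ≤ M := by positivity
  have hdistb : ∀ n i, dist (xp n i) (x i) ≤ ε n * M := by
    intro n i
    have : xp n i = x i + ((ε n) * (i : ℕ)) • u := rfl
    rw [this, dist_eq_norm, add_sub_cancel_left, norm_smul, Real.norm_eq_abs,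
      abs_of_nonneg (mul_nonneg (hεpos n).le (Nat.cast_nonneg _))]
    have hiN : ((i : ℕ) : ℝ) ≤ (N : ℝ) := by exact_mod_cast i.2.le
    have h1 : ε n * (i : ℕ) * ‖u‖ ≤ ε n * (N : ℝ) * ‖u‖ := by
      have h2 : ε n * ((i : ℕ) : ℝ) ≤ ε n * (N : ℝ) :=
        mul_le_mul_of_nonneg_left hiN (hεpos n).le
      exact mul_le_mul_of_nonneg_right h2 (norm_nonneg u)
    calc ε n * (i : ℕ) * ‖u‖ ≤ ε n * (N : ℝ) * ‖u‖ := h1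
      _ = ε n * M := by rw [hM]; ring
  have hsubset : ∀ (n : ℕ) (S : Set (Fin N)),
      convexHull ℝ (xp n '' S) ⊆ cthickening (ε n * M) (convexHull ℝ (x '' S)) := by
    intro n S
    refine hull_subset_cthickening (mul_nonneg (hεpos n).le hM0) ?_
    rintro a ⟨i, hi, rfl⟩
    exact ⟨x i, ⟨i, hi, rfl⟩, hdistb n i⟩
  have hcK : ∀ t, c (k t) ∈ cthickening M K0 := by
    intro t
    have h1 : c (k t) ∈ convexHull ℝ (xp (k t) '' ((φn (k t)) ⁻¹' {⟨0, hr₁pos⟩})) :=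
      hmem (k t) _
    have h2 := hsubset (k t) _ h1
    have h3 : cthickening (ε (k t) * M) (convexHull ℝ (x '' ((φn (k t)) ⁻¹' {⟨0, hr₁pos⟩})))
        ⊆ cthickening M K0 := by
      refine Subset.trans (cthickening_mono ?_ _) (cthickening_subset_of_subset M ?_)
      · have := hεle1 (k t)
        nlinarith [hεpos (k t)]
      · exact convexHull_mono (Set.image_subset_range _ _)
    exact h3 h2
  have hKc : IsCompact (cthickening M K0) := hK0.cthickening
  obtain ⟨a, -, ψ, hψ, hconv⟩ := hKc.tendsto_subseq hcK
  refine ⟨a, φ, ?_, ?_⟩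
  · have := hsurj (k 0)
    rwa [hkfib 0] at this
  · intro j
    set S := φ ⁻¹' {j} with hSdef
    set H := convexHull ℝ (x '' S) with hH
    have hHcl : IsClosed H := (((S.toFinite).image x).isCompact_convexHull ℝ).isClosed
    have hterm : ∀ t, c (k (ψ t)) ∈ cthickening (ε (k (ψ t)) * M) H := by
      intro t
      have h1 := hmem (k (ψ t)) j
      rw [hkfib (ψ t)] at h1
      exact hsubset _ _ h1
    have hinfd : ∀ t, EMetric.infEdist (c (k (ψ t))) H ≤ ENNReal.ofReal (ε (k (ψ t)) * M) :=
      fun t => (Metric.mem_cthickening_iff).1 (hterm t)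
    have htend1 : Filter.Tendsto (fun t => EMetric.infEdist (c (k (ψ t))) H)
        Filter.atTop (nhds (EMetric.infEdist a H)) :=
      (EMetric.continuous_infEdist.tendsto a).comp hconv
    have hεk : Filter.Tendsto (fun t => ε (k (ψ t))) Filter.atTop (nhds 0) := by
      have hik : Function.Injective (fun t => k (ψ t)) := hkinj.comp hψ.injective
      have := hεto0.comp hik.nat_tendsto_atTop
      simpa [Function.comp_def] using this
    have htend2 : Filter.Tendsto (fun t => ENNReal.ofReal (ε (k (ψ t)) * M))
        Filter.atTop (nhds 0) := by
      have h1 : Filter.Tendsto (fun t => ε (k (ψ t)) * M) Filter.atTop (nhds 0) := by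
        simpa using hεk.mul_const M
      have h2 := (ENNReal.continuous_ofReal.tendsto 0).comp h1
      simpa [Function.comp_def] using h2
    have hle : EMetric.infEdist a H ≤ 0 := le_of_tendsto_of_tendsto' htend1 htend2 hinfd
    have h0 : EMetric.infEdist a H = 0 := le_antisymm hle zero_le
    have hmemcl : a ∈ closure H := EMetric.mem_closure_iff_infEdist_zero.2 h0
    rwa [hHcl.closure_eq] at hmemcl


/-- The main induction: the family version of dimension reduction, for every dimension `d`. -/
lemma fam_reduction {δ : ℕ} (hδ : 1 ≤ δ) {ρ : ℝ} (hρ : 1 ≤ ρ)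
    (hyp : ∀ Q : Finset (EuclideanSpace ℝ (Fin δ)),
      ∃ c, HasTverbergDepth Q c (⌈(Q.card : ℝ) / ρ⌉.toNat)) :
    ∀ d N (x : Fin N → Euc d),
      ∃ c, ∃ φ : Fin N → Fin (⌈(N : ℝ) / ρ ^ (⌈(d : ℝ) / (δ : ℝ)⌉.toNat)⌉.toNat), FamTv x c φ := by
  have hρ0 : (0 : ℝ) < ρ := by linarith
  have hδ0 : (0 : ℝ) < (δ : ℝ) := by positivity
  intro d
  induction d using Nat.strong_induction_on with
  | _ d IH =>
  intro N x
  rcases Nat.eq_zero_or_pos N with hN | hN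
  · subst hN
    have h0 : (⌈((0 : ℕ) : ℝ) / ρ ^ (⌈(d : ℝ) / (δ : ℝ)⌉.toNat)⌉.toNat) = 0 := by norm_num
    have hemp : IsEmpty (Fin (⌈((0 : ℕ) : ℝ) / ρ ^ (⌈(d : ℝ) / (δ : ℝ)⌉.toNat)⌉.toNat)) := by
      rw [h0]; infer_instance
    exact ⟨0, fun i => i.elim0, fun j => hemp.elim j, fun j => hemp.elim j⟩
  by_cases hd0 : d = 0
  · subst hd0
    have hr : (⌈(N : ℝ) / ρ ^ (⌈((0 : ℕ) : ℝ) / (δ : ℝ)⌉.toNat)⌉.toNat) = N := by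
      norm_num
    rw [hr]
    refine ⟨x ⟨0, hN⟩, id, Function.surjective_id, fun j => ?_⟩
    have hxx : x ⟨0, hN⟩ = x j := by
      have hsub : ∀ a b : Euc 0, a = b := fun a b => PiLp.ext fun i => i.elim0
      exact hsub _ _
    rw [hxx]
    exact subset_convexHull ℝ _ ⟨j, rfl, rfl⟩
  have hd1 : 1 ≤ d := Nat.pos_of_ne_zero hd0
  have hr₁pos : 0 < (⌈(N : ℝ) / ρ⌉.toNat) := by
    have h1 : (0 : ℝ) < (N : ℝ) / ρ := by positivity
    have h2 := Int.ceil_pos.mpr h1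
    omega
  by_cases hdδ : d ≤ δ
  -- low-dimensional case: embed into ℝ^δ
  · have hk1 : (⌈(d : ℝ) / (δ : ℝ)⌉.toNat) = 1 := by
      have h1 : (0 : ℝ) < (d : ℝ) / (δ : ℝ) := by
        have : (0 : ℝ) < (d : ℝ) := by exact_mod_cast hd1
        positivity
      have h2 : ((d : ℝ) / (δ : ℝ)) ≤ 1 := by
        rw [div_le_one hδ0]
        exact_mod_cast hdδ
      have h3 : ⌈(d : ℝ) / (δ : ℝ)⌉ ≤ 1 := by
        have := Int.ceil_le.mpr (by push_cast; linarith : (d : ℝ) / (δ : ℝ) ≤ ((1 : ℤ) : ℝ))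
        exact this
      have h4 := Int.ceil_pos.mpr h1
      omega
    rw [hk1, pow_one]
    set J : Euc d → Euc δ :=
      fun y => WithLp.toLp 2 (fun kk : Fin δ => if h : (kk : ℕ) < d then y ⟨kk, h⟩ else 0) with hJ
    have hJlin : IsLinearMap ℝ J := by
      constructor
      · intro a b
        ext kk
        simp only [hJ, PiLp.add_apply, PiLp.toLp_apply]
        split <;> simp
      · intro cc a
        ext kk
        simp only [hJ, PiLp.smul_apply, smul_eq_mul, PiLp.toLp_apply]
        split <;> simp
    have hJinj : Function.Injective J := by
      intro a b hab
      ext kk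
      have h1 : J a ⟨(kk : ℕ), lt_of_lt_of_le kk.2 hdδ⟩
          = J b ⟨(kk : ℕ), lt_of_lt_of_le kk.2 hdδ⟩ := by rw [hab]
      simp only [hJ, PiLp.toLp_apply, dif_pos kk.2] at h1
      simpa [Fin.eta] using h1
    obtain ⟨c, φ, hsurj, hmemJ⟩ := family_hyp hδ hρ hyp N (fun i => J (x i))
    have hmem' : ∀ j, ∃ b, b ∈ convexHull ℝ (x '' (φ ⁻¹' {j})) ∧ J b = c := by
      intro j
      have h1 := hmemJ j
      rw [show ((fun i => J (x i)) '' (φ ⁻¹' {j})) = J '' (x '' (φ ⁻¹' {j})) from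
        Set.image_comp J x _, ← hJlin.image_convexHull] at h1
      obtain ⟨b, hb, hbc⟩ := h1
      exact ⟨b, hb, hbc⟩
    obtain ⟨b₀, hb₀, hb₀c⟩ := hmem' ⟨0, hr₁pos⟩
    refine ⟨b₀, φ, hsurj, fun j => ?_⟩
    obtain ⟨b, hb, hbc⟩ := hmem' j
    have hbb : b = b₀ := hJinj (by rw [hbc, hb₀c])
    rwa [hbb] at hb
  -- high-dimensional case: project onto the first δ coordinates, lift through the fiber
  · push_neg at hdδ
    have hdd : δ ≤ d := hdδ.le
    set m := d - δ with hm
    have hmlt : m < d := by omega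
    set π : Euc d → Euc δ := fun y => WithLp.toLp 2 (fun kk : Fin δ => y (Fin.castLE hdd kk)) with hπ
    set σ : Euc δ → Euc d :=
      fun z => WithLp.toLp 2 (fun kk : Fin d => if h : (kk : ℕ) < δ then z ⟨kk, h⟩ else 0) with hσ
    set Ψ : Euc m → Euc d :=
      fun w => WithLp.toLp 2 (fun kk : Fin d =>
        if h : (kk : ℕ) < δ then 0 else w ⟨(kk : ℕ) - δ, by have := kk.isLt; omega⟩) with hΨ
    have hπlin : IsLinearMap ℝ π := by
      constructor
      · intro a b; ext kk; simp [hπ, PiLp.add_apply]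
      · intro cc a; ext kk; simp [hπ, PiLp.smul_apply]
    have hΨlin : IsLinearMap ℝ Ψ := by
      constructor
      · intro a b
        ext kk
        simp only [hΨ, PiLp.add_apply, PiLp.toLp_apply]
        split <;> simp
      · intro cc a
        ext kk
        simp only [hΨ, PiLp.smul_apply, smul_eq_mul, PiLp.toLp_apply]
        split <;> simp
    obtain ⟨c, φ₁, hsurj₁, hmem₁⟩ := family_hyp hδ hρ hyp N (fun i => π (x i))
    have hz : ∀ j, ∃ zz, zz ∈ convexHull ℝ (x '' (φ₁ ⁻¹' {j})) ∧ π zz = c := by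
      intro j
      have h1 := hmem₁ j
      rw [show ((fun i => π (x i)) '' (φ₁ ⁻¹' {j})) = π '' (x '' (φ₁ ⁻¹' {j})) from
        Set.image_comp π x _, ← hπlin.image_convexHull] at h1
      obtain ⟨b, hb, hbc⟩ := h1
      exact ⟨b, hb, hbc⟩
    choose z hzmem hzπ using hz
    set w : Fin (⌈(N : ℝ) / ρ⌉.toNat) → Euc m :=
      fun j => WithLp.toLp 2 (fun i : Fin m => z j ⟨δ + (i : ℕ), by have := i.isLt; omega⟩) with hw
    have hzw : ∀ j, σ c + Ψ (w j) = z j := by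
      intro j
      ext kk
      by_cases h : (kk : ℕ) < δ
      · have h1 : π (z j) ⟨(kk : ℕ), h⟩ = c ⟨(kk : ℕ), h⟩ := by rw [hzπ j]
        simp only [hπ, PiLp.toLp_apply] at h1
        simp only [PiLp.add_apply, hσ, hΨ, PiLp.toLp_apply, dif_pos h, add_zero]
        rw [← h1]
        rfl
      · simp only [PiLp.add_apply, hσ, hΨ, PiLp.toLp_apply, dif_neg h, zero_add, hw]
        exact congrArg (WithLp.ofLp (z j)) (Fin.ext (by show δ + ((kk : ℕ) - δ) = (kk : ℕ); omega))
    obtain ⟨c', φ₂, hsurj₂, hmem₂⟩ := IH m hmlt (⌈(N : ℝ) / ρ⌉.toNat) w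
    set ΨL : Euc m →ₗ[ℝ] Euc d := IsLinearMap.mk' Ψ hΨlin with hΨL
    set A : Euc m →ᵃ[ℝ] Euc d :=
      { toFun := fun y => σ c + Ψ y
        linear := ΨL
        map_vadd' := by
          intro p v
          simp only [vadd_eq_add, hΨL, IsLinearMap.mk'_apply, hΨlin.map_add]
          abel } with hA
    have hAapp : ∀ y, A y = σ c + Ψ y := fun y => rfl
    set c'' := σ c + Ψ c' with hc''
    have hfinal : ∀ l, c'' ∈ convexHull ℝ (x '' ((fun i => φ₂ (φ₁ i)) ⁻¹' {l})) := by
      intro l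
      have h1 : A c' ∈ convexHull ℝ (A '' (w '' (φ₂ ⁻¹' {l}))) := by
        rw [← AffineMap.image_convexHull]
        exact ⟨c', hmem₂ l, rfl⟩
      have h2 : A '' (w '' (φ₂ ⁻¹' {l}))
          ⊆ convexHull ℝ (x '' ((fun i => φ₂ (φ₁ i)) ⁻¹' {l})) := by
        rintro _ ⟨_, ⟨j, hj, rfl⟩, rfl⟩
        rw [show A (w j) = z j from (hAapp (w j)).trans (hzw j)]
        refine convexHull_mono (Set.image_mono ?_) (hzmem j)
        intro i hi
        simp only [Set.mem_preimage, Set.mem_singleton_iff] at hi hj ⊢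
        rw [hi, hj]
      have h3 := convexHull_min h2 (convex_convexHull ℝ _) h1
      have h4 : c'' = A c' := by rw [hc'']; exact (hAapp c').symm
      rw [h4]
      exact h3
    -- counting
    have hkk : (⌈(d : ℝ) / (δ : ℝ)⌉.toNat) = (⌈(m : ℝ) / (δ : ℝ)⌉.toNat) + 1 := by
      have hcast : ((m : ℕ) : ℝ) = (d : ℝ) - (δ : ℝ) := by
        rw [hm]; push_cast [Nat.cast_sub hdd]; ring
      have hsplit : (d : ℝ) / (δ : ℝ) = ((m : ℕ) : ℝ) / (δ : ℝ) + 1 := by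
        rw [hcast, sub_div, div_self hδ0.ne']; ring
      rw [hsplit, Int.ceil_add_one]
      have h0 : 0 ≤ ⌈((m : ℕ) : ℝ) / (δ : ℝ)⌉ := Int.ceil_nonneg (by positivity)
      omega
    have hr₂ : (⌈(N : ℝ) / ρ ^ (⌈(d : ℝ) / (δ : ℝ)⌉.toNat)⌉.toNat)
        ≤ (⌈((⌈(N : ℝ) / ρ⌉.toNat : ℕ) : ℝ) / ρ ^ (⌈(m : ℝ) / (δ : ℝ)⌉.toNat)⌉.toNat) := by
      rw [hkk]
      have h1 : (N : ℝ) / ρ ≤ ((⌈(N : ℝ) / ρ⌉.toNat : ℕ) : ℝ) := by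
        calc (N : ℝ) / ρ ≤ (⌈(N : ℝ) / ρ⌉ : ℝ) := Int.le_ceil _
          _ ≤ ((⌈(N : ℝ) / ρ⌉.toNat : ℤ) : ℝ) := by exact_mod_cast Int.self_le_toNat _
          _ = ((⌈(N : ℝ) / ρ⌉.toNat : ℕ) : ℝ) := by push_cast; ring
      have h2 : (N : ℝ) / ρ ^ ((⌈(m : ℝ) / (δ : ℝ)⌉.toNat) + 1)
          ≤ ((⌈(N : ℝ) / ρ⌉.toNat : ℕ) : ℝ) / ρ ^ (⌈(m : ℝ) / (δ : ℝ)⌉.toNat) := by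
        have he : (N : ℝ) / ρ ^ ((⌈(m : ℝ) / (δ : ℝ)⌉.toNat) + 1)
            = ((N : ℝ) / ρ) / ρ ^ (⌈(m : ℝ) / (δ : ℝ)⌉.toNat) := by
          rw [div_div, pow_succ]; ring_nf
        rw [he]
        have hpow : (0 : ℝ) < ρ ^ (⌈(m : ℝ) / (δ : ℝ)⌉.toNat) := by positivity
        exact div_le_div_of_nonneg_right h1 hpow.le |>.trans_eq rfl
      have h3 := Int.ceil_mono h2
      exact Int.toNat_le_toNat h3
    have hrtpos : 0 < (⌈(N : ℝ) / ρ ^ (⌈(d : ℝ) / (δ : ℝ)⌉.toNat)⌉.toNat) := by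
      have h1 : (0 : ℝ) < (N : ℝ) / ρ ^ (⌈(d : ℝ) / (δ : ℝ)⌉.toNat) := by positivity
      have h2 := Int.ceil_pos.mpr h1
      omega
    have hFT : FamTv x c'' (fun i => φ₂ (φ₁ i)) := ⟨hsurj₂.comp hsurj₁, hfinal⟩
    obtain ⟨φ', hφ'⟩ := hFT.shrink hr₂ hrtpos
    exact ⟨c'', φ', hφ'⟩


end DimRedAux

/-- Dimension reduction: if every point set in `ℝ^δ` has a Tverberg point of depth
`⌈|Q|/ρ⌉`, then every `n`-point set in `ℝ^d` (`d ≥ δ`) has a Tverberg point of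
depth `⌈n/ρ^⌈d/δ⌉⌉`. -/
theorem dimension_reduction (δ d : ℕ) (hδ : 1 ≤ δ) (hdδ : δ ≤ d)
    (ρ : ℝ) (hρ : 1 ≤ ρ)
    (hyp : ∀ Q : Finset (EuclideanSpace ℝ (Fin δ)),
      ∃ c, HasTverbergDepth Q c (⌈(Q.card : ℝ) / ρ⌉.toNat))
    (P : Finset (EuclideanSpace ℝ (Fin d))) :
    ∃ c, HasTverbergDepth P c
      (⌈(P.card : ℝ) / ρ ^ (⌈(d : ℝ) / (δ : ℝ)⌉.toNat)⌉.toNat) := by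
  classical
  set x : Fin P.card → EuclideanSpace ℝ (Fin d) :=
    fun i => ((P.equivFin.symm i : P) : EuclideanSpace ℝ (Fin d)) with hx
  have hxinj : Function.Injective x := fun a b h =>
    P.equivFin.symm.injective (Subtype.ext h)
  obtain ⟨c, φ, hsurj, hmem⟩ := fam_reduction hδ hρ hyp d P.card x
  refine ⟨c, ?_⟩
  unfold HasTverbergDepth
  refine ⟨fun j => Finset.image x (Finset.univ.filter (fun i => φ i = j)),
    ?_, ?_, ?_, ?_, ?_⟩
  · intro j
    obtain ⟨i, hi⟩ := hsurj j
    exact ⟨x i, Finset.mem_image_of_mem _ (Finset.mem_filter.2 ⟨Finset.mem_univ i, hi⟩)⟩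
  · intro i j hij
    rw [Finset.disjoint_left]
    rintro p hp hq
    obtain ⟨a, ha, rfl⟩ := Finset.mem_image.1 hp
    obtain ⟨b, hb, hba⟩ := Finset.mem_image.1 hq
    have hab : b = a := hxinj hba
    have h1 : φ a = i := (Finset.mem_filter.1 ha).2
    have h2 : φ b = j := (Finset.mem_filter.1 hb).2
    rw [hab, h1] at h2
    exact hij h2
  · intro p hp
    refine ⟨φ (P.equivFin ⟨p, hp⟩), Finset.mem_image.2
      ⟨P.equivFin ⟨p, hp⟩, Finset.mem_filter.2 ⟨Finset.mem_univ _, rfl⟩, ?_⟩⟩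
    show x _ = p
    rw [hx]
    simp
  · intro j p hp
    obtain ⟨a, -, rfl⟩ := Finset.mem_image.1 hp
    exact (P.equivFin.symm a).2
  · intro j
    have hset : ((Finset.image x (Finset.univ.filter (fun i => φ i = j))) :
        Set (EuclideanSpace ℝ (Fin d))) = x '' (φ ⁻¹' {j}) := by
      rw [Finset.coe_image, Finset.coe_filter]
      congr 1
      ext i
      simp
    rw [hset]
    exact hmem j
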